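/- Let d ≥ 1, e = (1,...,1) ∈ ℝ^d, T̃ > 0, and let Ũ = {t ∈ ℝ^d : ⟨t, e⟩ ≥ 0, t_i ≤ c_i T̃ for all i} for positive constants c_i. Let Z be the set of integer points z ∈ ℤ^d lying on the hyperplane face π_0 = {t ∈ closure(Ũ) : ⟨t,e⟩ = 0} (enlarged by distance d−1 in the first coordinate as needed). Then the union of translated positive orthants ∪_{z ∈ Z} {t : t ≥ z − d·e} covers Ũ. -/

import Mathlib

/-- the region `Ũ = {t : ⟨t,e⟩ ≥ 0, tᵢ ≤ cᵢ T̃}` is covered by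
the translated positive orthants with vertices `z − d·e`, where `z` ranges over
integer points on (a bounded enlargement of) the face `⟨t,e⟩ = 0`: for each
`t ∈ Ũ` there is an integer point `z` with `∑ zᵢ = 0`, lying within distance
`d` (coordinatewise) of the orthogonal projection `t̂ = t − (⟨t,e⟩/d)e` of `t`
onto the hyperplane `⟨t,e⟩ = 0`, such that `t ≥ z − d·e` coordinatewise. -/
theorem orthant_cover_of_simplex
    (d : ℕ) (hd : 1 ≤ d) (c : Fin d → ℝ) (hc : ∀ i, 0 < c i)
    (T : ℝ) (hT : 0 < T) :
    ∀ t : Fin d → ℝ, 0 ≤ ∑ i, t i → (∀ i, t i ≤ c i * T) →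
      ∃ z : Fin d → ℤ, (∑ i, z i) = 0 ∧
        (∀ i, |(z i : ℝ) - (t i - (∑ j, t j) / d)| ≤ d) ∧
        ∀ i, (z i : ℝ) - d ≤ t i := by
  classical
  intro t hsum hle
  have hd0 : (0:ℝ) < d := by
    have : (1:ℝ) ≤ d := by exact_mod_cast hd
    linarith
  have hd1 : (1:ℝ) ≤ d := by exact_mod_cast hd
  set s : ℝ := ∑ i, t i with hs
  set th : Fin d → ℝ := fun i => t i - s / d with hth
  have hthsum : ∑ i, th i = 0 := by
    have : ∑ i, th i = s - d * (s / d) := by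
      simp [hth, Finset.sum_sub_distrib, ← hs, mul_comm]
    rw [this]
    field_simp
    ring
  have hthle : ∀ i, th i ≤ t i := by
    intro i
    have : 0 ≤ s / d := div_nonneg hsum (le_of_lt hd0)
    simp only [hth]
    linarith
  set i0 : Fin d := ⟨0, hd⟩ with hi0
  set E : Finset (Fin d) := Finset.univ.erase i0 with hE
  set z : Fin d → ℤ := fun i => if i = i0 then -(∑ j ∈ E, ⌊th j⌋) else ⌊th i⌋
    with hz
  have hzE : ∀ j ∈ E, z j = ⌊th j⌋ := by
    intro j hj
    simp [hz, Finset.ne_of_mem_erase hj]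
  -- sum of z is 0
  have hzsum : ∑ i, z i = 0 := by
    rw [← Finset.add_sum_erase _ z (Finset.mem_univ i0), ← hE,
      Finset.sum_congr rfl hzE]
    simp [hz]
  -- key bound for each i
  have hkey : ∀ i, |(z i : ℝ) - th i| ≤ d := by
    intro i
    by_cases hi : i = i0
    · subst hi
      -- z i = -(∑ j in E, ⌊th j⌋), and th i = -(∑ j in E, th j)
      have hth0 : th i0 = -(∑ j ∈ E, th j) := by
        have := Finset.add_sum_erase _ th (Finset.mem_univ i0)
        rw [← hE] at this
        rw [hthsum] at this
        linarith
      have hval : (z i0 : ℝ) - th i0 = ∑ j ∈ E, (th j - ⌊th j⌋) := by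
        simp only [hz, if_pos rfl, hth0, Finset.sum_sub_distrib]
        push_cast
        ring
      rw [hval]
      have h1 : ∀ j ∈ E, (0:ℝ) ≤ th j - ⌊th j⌋ := fun j _ => by
        have := Int.floor_le (th j); linarith
      have h2 : ∀ j ∈ E, th j - ⌊th j⌋ ≤ 1 := fun j _ => by
        have := Int.lt_floor_add_one (th j); linarith
      have hnn : (0:ℝ) ≤ ∑ j ∈ E, (th j - ⌊th j⌋) := Finset.sum_nonneg h1
      have hub : ∑ j ∈ E, (th j - ⌊th j⌋) ≤ E.card • (1:ℝ) :=
        Finset.sum_le_card_nsmul E _ 1 h2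
      have hcard : (E.card : ℝ) ≤ d := by
        have : E.card ≤ d := le_trans Finset.card_erase_le (by simp)
        exact_mod_cast this
      rw [abs_le]
      constructor
      · linarith
      · have : ∑ j ∈ E, (th j - ⌊th j⌋) ≤ (E.card : ℝ) := by
          simpa using hub
        linarith
    · have hzv : z i = ⌊th i⌋ := by simp [hz, hi]
      rw [hzv, abs_le]
      have h1 := Int.floor_le (th i)
      have h2 := Int.lt_floor_add_one (th i)
      constructor <;> push_cast <;> linarith
  refine ⟨z, hzsum, ?_, ?_⟩
  · intro i
    simpa [hth, hs] using hkey i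
  · intro i
    have h := (abs_le.mp (hkey i)).2
    have := hthle i
    linarith
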